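/- Let N ≥ 2, δ > 0, i ∈ {1, …, N−1}, and let a : B′_δ(0) ⊂ ℝ^{N−1} → ℝ be a C¹ function with a(0) = 0 and ∂_i a(0) = 0. Suppose that the function t ↦ a(t e_i) is not identically zero on {t ∈ ℝ : t e_i ∈ B′_δ(0)}. Then there exist real numbers t₁, t₂ with t₁ e_i, t₂ e_i ∈ B′_δ(0) such that the two vectors t₁ e_i + a(t₁ e_i) e_N and t₂ e_i + a(t₂ e_i) e_N of ℝ^N are linearly independent. -/

import Mathlib

open scoped RealInnerProductSpace
open Metric

noncomputable section

/-- `ℝ^N` as a Euclidean space. -/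
abbrev Euc (N : ℕ) := EuclideanSpace ℝ (Fin N)

/-- real `N × N` matrices. -/
abbrev MatN (N : ℕ) := Matrix (Fin N) (Fin N) ℝ

variable {N : ℕ}

/-- Pucci maximal operator `M⁺(M) = λ tr(M⁻) + Λ tr(M⁺)`, written in terms of the
eigenvalues of the symmetric matrix `M`. -/
noncomputable def pucciSup (lam Lam : ℝ) (M : MatN N) : ℝ :=
  if h : M.IsHermitian then
    ∑ i, (lam * min (h.eigenvalues i) 0 + Lam * max (h.eigenvalues i) 0)
  else 0

/-- Pucci minimal operator `M⁻(M) = λ tr(M⁺) + Λ tr(M⁻)`. -/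
noncomputable def pucciInf (lam Lam : ℝ) (M : MatN N) : ℝ :=
  if h : M.IsHermitian then
    ∑ i, (lam * max (h.eigenvalues i) 0 + Lam * min (h.eigenvalues i) 0)
  else 0

/-- `F` is uniformly elliptic with ellipticity constants `lam ≤ Lam`:
`M⁻(M) ≤ F(M) ≤ M⁺(M)` for every symmetric `M`. -/
def UniformlyElliptic (lam Lam : ℝ) (F : MatN N → ℝ) : Prop :=
  Continuous F ∧ ∀ M : MatN N, M.IsHermitian →
    pucciInf lam Lam M ≤ F M ∧ F M ≤ pucciSup lam Lam M

/-- Hessian matrix of a real function at a point. -/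
noncomputable def hessian (φ : Euc N → ℝ) (x : Euc N) : MatN N :=
  Matrix.of fun i j =>
    iteratedFDeriv ℝ 2 φ x ![EuclideanSpace.single i 1, EuclideanSpace.single j 1]

/-- Viscosity subsolution of `G(x, ∇u, D²u) = f` on `D`: whenever a `C²` test function
`φ` touches `u` from above (`u - φ` has a local max) at `x₀ ∈ D`, then
`G(x₀, ∇φ(x₀), D²φ(x₀)) ≥ f x₀`. -/
def ViscositySubsolution (D : Set (Euc N)) (G : Euc N → Euc N → MatN N → ℝ)
    (f : Euc N → ℝ) (u : Euc N → ℝ) : Prop :=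
  ∀ x₀ ∈ D, ∀ φ : Euc N → ℝ, ContDiffAt ℝ 2 φ x₀ →
    IsLocalMax (fun x => u x - φ x) x₀ → f x₀ ≤ G x₀ (gradient φ x₀) (hessian φ x₀)

/-- Viscosity supersolution of `G(x, ∇u, D²u) = f` on `D`. -/
def ViscositySupersolution (D : Set (Euc N)) (G : Euc N → Euc N → MatN N → ℝ)
    (f : Euc N → ℝ) (u : Euc N → ℝ) : Prop :=
  ∀ x₀ ∈ D, ∀ φ : Euc N → ℝ, ContDiffAt ℝ 2 φ x₀ →
    IsLocalMin (fun x => u x - φ x) x₀ → G x₀ (gradient φ x₀) (hessian φ x₀) ≤ f x₀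

/-- Viscosity solution: both a sub- and a supersolution. -/
def ViscositySolution (D : Set (Euc N)) (G : Euc N → Euc N → MatN N → ℝ)
    (f : Euc N → ℝ) (u : Euc N → ℝ) : Prop :=
  ViscositySubsolution D G f u ∧ ViscositySupersolution D G f u

/-- The degenerate elliptic operator `(x, p, M) ↦ |p|^α (F(M) + h(x)·p)`. -/
noncomputable def degenOp (α : ℝ) (F : MatN N → ℝ) (h : Euc N → Euc N) :
    Euc N → Euc N → MatN N → ℝ :=
  fun x p M => ‖p‖ ^ α * (F M + ⟪h x, p⟫)

/-- the first `N` coordinates `y'` of a point `y = (y', y_N)` of `ℝ^{N+1}`. -/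
noncomputable def projHyp (y : Euc (N + 1)) : Euc N := WithLp.toLp 2 (fun i : Fin N => y i.castSucc)

/-- the last coordinate `y_N` of a point `y = (y', y_N)` of `ℝ^{N+1}`. -/
noncomputable def lastCoord (y : Euc (N + 1)) : ℝ := y (Fin.last N)

/-- the point `(x', s) ∈ ℝ^{N+1}`. -/
noncomputable def withLast (x' : Euc N) (s : ℝ) : Euc (N + 1) := WithLp.toLp 2 (Fin.snoc (α := fun _ => ℝ) (WithLp.ofLp x') s)

/-- the last basis vector `e_N` of `ℝ^{N+1}`. -/
noncomputable def eLast (N : ℕ) : Euc (N + 1) := EuclideanSpace.single (Fin.last N) 1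

end

/-- Step in Proposition 3.7: if `t ↦ a(t e_i)` is not identically zero near `0`, there
are `t₁, t₂` with `t₁e_i + a(t₁e_i)e_N` and `t₂e_i + a(t₂e_i)e_N` linearly independent. -/
theorem linearly_independent_graph_vectors
    {N : ℕ} (hN : 1 ≤ N) (δ : ℝ) (hδ : 0 < δ) (i : Fin N)
    (a : Euc N → ℝ) (ha : ContDiffOn ℝ 1 a (ball (0 : Euc N) δ))
    (ha0 : a 0 = 0)
    (hai : fderiv ℝ a 0 (EuclideanSpace.single i 1) = 0)
    (hne : ∃ t : ℝ, t • (EuclideanSpace.single i 1 : Euc N) ∈ ball (0 : Euc N) δ ∧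
      a (t • EuclideanSpace.single i 1) ≠ 0) :
    ∃ t₁ t₂ : ℝ,
      t₁ • (EuclideanSpace.single i 1 : Euc N) ∈ ball (0 : Euc N) δ ∧
      t₂ • (EuclideanSpace.single i 1 : Euc N) ∈ ball (0 : Euc N) δ ∧
      LinearIndependent ℝ
        ![withLast (t₁ • EuclideanSpace.single i 1) (a (t₁ • EuclideanSpace.single i 1)),
          withLast (t₂ • EuclideanSpace.single i 1) (a (t₂ • EuclideanSpace.single i 1))] := by
  classical
  obtain ⟨t₁, ht₁ball, ht₁ne⟩ := hne
  set e : Euc N := EuclideanSpace.single i 1 with he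
  have hnorme : ‖e‖ = 1 := by simp [he, EuclideanSpace.norm_single]
  have hnorm : ∀ t : ℝ, ‖t • e‖ = |t| := by
    intro t; rw [norm_smul, hnorme, Real.norm_eq_abs, mul_one]
  set g : ℝ → ℝ := fun s => a (s • e) with hg
  have hg0 : g 0 = 0 := by simp [hg, ha0]
  have ht₁0 : t₁ ≠ 0 := by
    intro h; apply ht₁ne; simp [h, ha0]
  -- derivative of g at 0 is 0
  have hball0 : (0 : Euc N) ∈ ball (0 : Euc N) δ := mem_ball_self hδ
  have hda : DifferentiableAt ℝ a 0 :=
    ((ha.contDiffAt (isOpen_ball.mem_nhds hball0)).differentiableAt one_ne_zero)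
  have hcurve : HasDerivAt (fun s : ℝ => s • e) e 0 := by
    simpa using (hasDerivAt_id (0 : ℝ)).smul_const e
  have hfd : HasFDerivAt a (fderiv ℝ a 0) ((0:ℝ) • e) := by
    simpa using hda.hasFDerivAt
  have hgd : HasDerivAt g 0 0 := by
    have := hfd.comp_hasDerivAt (0 : ℝ) hcurve
    simp only [hai] at this; exact this
  have htend : Filter.Tendsto (slope g 0) (nhdsWithin 0 {(0:ℝ)}ᶜ) (nhds 0) :=
    hasDerivAt_iff_tendsto_slope.mp hgd
  set c : ℝ := |g t₁| / |t₁| with hc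
  have hcpos : 0 < c := div_pos (abs_pos.mpr ht₁ne) (abs_pos.mpr ht₁0)
  have h1 : ∀ᶠ s in nhdsWithin 0 {(0:ℝ)}ᶜ, |slope g 0 s| < c := by
    have := htend (Metric.ball_mem_nhds 0 hcpos)
    filter_upwards [this] with s hs
    simpa [Real.norm_eq_abs] using mem_ball_zero_iff.mp hs
  have h2 : ∀ᶠ s in nhdsWithin 0 {(0:ℝ)}ᶜ, |s| < δ := by
    apply eventually_nhdsWithin_of_eventually_nhds
    have : Filter.Tendsto (fun s : ℝ => |s|) (nhds 0) (nhds 0) := by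
      simpa using continuous_abs.tendsto (0:ℝ)
    exact this (Iio_mem_nhds hδ)
  have h3 : ∀ᶠ s in nhdsWithin 0 {(0:ℝ)}ᶜ, s ≠ 0 := by
    filter_upwards [self_mem_nhdsWithin] with s hs
    exact hs
  obtain ⟨t₂, hs1, hs2, ht₂0⟩ := (h1.and (h2.and h3)).exists
  have hslope : slope g 0 t₂ = g t₂ / t₂ := by
    simp [slope, hg0, div_eq_inv_mul]
  rw [hslope] at hs1
  -- key inequality
  have hkey : t₁ * a (t₂ • e) ≠ t₂ * a (t₁ • e) := by
    intro heq
    simp only [hg] at hs1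
    rw [hc] at hs1
    simp only [hg] at hs1
    have habs : |a (t₂ • e)| / |t₂| < |a (t₁ • e)| / |t₁| := by
      rw [← abs_div]; exact hs1
    rw [div_lt_div_iff₀ (abs_pos.mpr ht₂0) (abs_pos.mpr ht₁0)] at habs
    have h2 : |t₁ * a (t₂ • e)| = |t₂ * a (t₁ • e)| := by rw [heq]
    rw [abs_mul, abs_mul] at h2
    nlinarith
  refine ⟨t₁, t₂, ht₁ball, ?_, ?_⟩
  · rw [mem_ball_zero_iff, hnorm]; exact hs2
  · rw [LinearIndependent.pair_iff]
    intro s t hst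
    have hlast := congrArg (fun v : Euc (N + 1) => v (Fin.last N)) hst
    have hi := congrArg (fun v : Euc (N + 1) => v (Fin.castSucc i)) hst
    simp only [withLast, PiLp.toLp_apply, PiLp.add_apply, PiLp.smul_apply, PiLp.zero_apply,
      Fin.snoc_last, Fin.snoc_castSucc, smul_eq_mul] at hlast hi
    have hei : e i = 1 := by simp [he, EuclideanSpace.single_apply]
    rw [hei, mul_one, mul_one] at hi
    have hA : s * (t₁ * a (t₂ • e) - t₂ * a (t₁ • e)) = 0 := by
      linear_combination a (t₂ • e) * hi - t₂ * hlast
    have hB : t * (t₁ * a (t₂ • e) - t₂ * a (t₁ • e)) = 0 := by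
      linear_combination t₁ * hlast - a (t₁ • e) * hi
    have hne' : t₁ * a (t₂ • e) - t₂ * a (t₁ • e) ≠ 0 := sub_ne_zero.mpr hkey
    exact ⟨by rcases mul_eq_zero.mp hA with h | h; exact h; exact absurd h hne',
      by rcases mul_eq_zero.mp hB with h | h; exact h; exact absurd h hne'⟩
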